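/- arXiv:1610.05955 — 2 statements merged into one kernel-verified Lean document; each statement's English description precedes it below -/
import Mathlib

section
/- Let (X_n)_{n≥1} be i.i.d. real-valued random variables with E[X_1] > 0. Then P(X_1 + ⋯ + X_n > 0 for all n ≥ 1) > 0. -/
open MeasureTheory ProbabilityTheory Finset

section aux

variable {Ω : Type*} [MeasurableSpace Ω] (P : Measure Ω) [IsProbabilityMeasure P]
    (X : ℕ → Ω → ℝ) (hmeas : ∀ n, Measurable (X n))
    (hindep : iIndepFun X P)
    (hident : ∀ n, P.map (X n) = P.map (X 0))

include hmeas hindep hident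

lemma map_tuple {N : ℕ} (f : Fin N → ℕ) (hf : Function.Injective f) :
    P.map (fun ω (i : Fin N) => X (f i) ω) =
      Measure.pi (fun _ : Fin N => P.map (X 0)) := by
  have hPM : IsProbabilityMeasure (P.map (X 0)) :=
    Measure.isProbabilityMeasure_map (hmeas 0).aemeasurable
  refine (Measure.pi_eq (fun s hs => ?_)).symm
  have htuple : Measurable (fun ω (i : Fin N) => X (f i) ω) :=
    measurable_pi_lambda _ fun i => hmeas (f i)
  rw [Measure.map_apply htuple (MeasurableSet.univ_pi hs)]
  have hpre : (fun ω (i : Fin N) => X (f i) ω) ⁻¹' Set.pi Set.univ s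
      = ⋂ i : Fin N, X (f i) ⁻¹' s i := by
    ext ω; simp [Set.mem_pi]
  rw [hpre]
  classical
  -- extended family of sets
  set s' : ℕ → Set ℝ := fun n => if h : ∃ i, f i = n then s h.choose else Set.univ with hs'
  have hs'f : ∀ i, s' (f i) = s i := by
    intro i
    have h : ∃ j, f j = f i := ⟨i, rfl⟩
    have := h.choose_spec
    simp only [hs', dif_pos h]
    rw [hf this]
  have hs'meas : ∀ n, MeasurableSet (s' n) := by
    intro n
    by_cases h : ∃ i, f i = n
    · simp only [hs', dif_pos h]; exact hs _
    · simp only [hs', dif_neg h]; exact MeasurableSet.univ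
  have hiInter : (⋂ i : Fin N, X (f i) ⁻¹' s i)
      = ⋂ n ∈ Finset.univ.image f, X n ⁻¹' s' n := by
    ext ω
    simp only [Set.mem_iInter, Finset.mem_image, Finset.mem_univ, true_and]
    constructor
    · rintro h n ⟨i, rfl⟩; rw [hs'f]; exact h i
    · intro h i; rw [← hs'f]; exact h (f i) ⟨i, rfl⟩
  rw [hiInter, hindep.measure_inter_preimage_eq_mul (Finset.univ.image f)
      (fun n _ => hs'meas n)]
  rw [Finset.prod_image (fun i _ j _ h => hf h)]
  refine Finset.prod_congr rfl (fun i _ => ?_)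
  rw [hs'f, ← Measure.map_apply (hmeas (f i)) (hs i), hident (f i)]

lemma event_prob_eq (g : ℕ → ℕ) (hg : Function.Injective g) :
    P {ω | ∀ n : ℕ, 0 < ∑ m ∈ Finset.range (n + 1), X (g m) ω}
      = P {ω | ∀ n : ℕ, 0 < ∑ m ∈ Finset.range (n + 1), X m ω} := by
  classical
  have hPM : IsProbabilityMeasure (P.map (X 0)) := Measure.isProbabilityMeasure_map (hmeas 0).aemeasurable
  -- cylinder set in ℝ^N
  have key : ∀ (h : ℕ → ℕ), Function.Injective h → ∀ N : ℕ,
      P {ω | ∀ j < N, 0 < ∑ m ∈ Finset.range (j + 1), X (h m) ω}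
        = (Measure.pi fun _ : Fin N => P.map (X 0))
            {v | ∀ j < N, 0 < ∑ m ∈ Finset.range (j + 1),
              if hm : m < N then v ⟨m, hm⟩ else 0} := by
    intro h hh N
    have hC : MeasurableSet {v : Fin N → ℝ | ∀ j < N, 0 < ∑ m ∈ Finset.range (j + 1),
        if hm : m < N then v ⟨m, hm⟩ else 0} := by
      have : {v : Fin N → ℝ | ∀ j < N, 0 < ∑ m ∈ Finset.range (j + 1),
          if hm : m < N then v ⟨m, hm⟩ else 0}
        = ⋂ j, ⋂ (_ : j < N), {v : Fin N → ℝ | 0 < ∑ m ∈ Finset.range (j + 1),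
            if hm : m < N then v ⟨m, hm⟩ else 0} := by
        ext v; simp
      rw [this]
      refine MeasurableSet.iInter fun j => MeasurableSet.iInter fun _ => ?_
      refine measurableSet_lt measurable_const ?_
      refine Finset.measurable_sum _ fun m _ => ?_
      by_cases hm : m < N
      · simp only [dif_pos hm]; exact measurable_pi_apply _
      · simp only [dif_neg hm]; exact measurable_const
    have htuple : Measurable (fun ω (i : Fin N) => X (h i) ω) :=
      measurable_pi_lambda _ fun i => hmeas (h i)
    have hfinj : Function.Injective (fun i : Fin N => h i.val) :=
      fun i j hij => Fin.val_injective (hh hij)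
    have := map_tuple P X hmeas hindep hident (fun i : Fin N => h i.val) hfinj
    rw [← this, Measure.map_apply htuple hC]
    congr 1
    ext ω
    simp only [Set.mem_preimage, Set.mem_setOf_eq]
    refine forall_congr' fun j => forall_congr' fun hj => ?_
    have hsum : ∀ (Y : ℕ → ℝ), (∑ m ∈ Finset.range (j + 1),
        if hm : m < N then Y (h m) else 0) = ∑ m ∈ Finset.range (j + 1), Y (h m) := by
      intro Y
      refine Finset.sum_congr rfl fun m hm => ?_
      have : m < N := lt_of_le_of_lt (Nat.lt_succ_iff.1 (Finset.mem_range.1 hm)) hj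
      simp [this]
    rw [hsum (fun n => X n ω)]
  -- continuity from above
  have cont : ∀ (h : ℕ → ℕ), Function.Injective h →
      P {ω | ∀ n : ℕ, 0 < ∑ m ∈ Finset.range (n + 1), X (h m) ω}
        = ⨅ N : ℕ, P {ω | ∀ j < N, 0 < ∑ m ∈ Finset.range (j + 1), X (h m) ω} := by
    intro h hh
    have hmeasD : ∀ N : ℕ, MeasurableSet
        {ω | ∀ j < N, 0 < ∑ m ∈ Finset.range (j + 1), X (h m) ω} := by
      intro N
      have : {ω | ∀ j < N, 0 < ∑ m ∈ Finset.range (j + 1), X (h m) ω}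
          = ⋂ j, ⋂ (_ : j < N), {ω | 0 < ∑ m ∈ Finset.range (j + 1), X (h m) ω} := by
        ext ω; simp
      rw [this]
      refine MeasurableSet.iInter fun j => MeasurableSet.iInter fun _ => ?_
      exact measurableSet_lt measurable_const
        (Finset.measurable_sum _ fun m _ => hmeas (h m))
    have hanti : Antitone (fun N => {ω | ∀ j < N, 0 < ∑ m ∈ Finset.range (j + 1), X (h m) ω}) := by
      intro a b hab ω hω j hj
      exact hω j (lt_of_lt_of_le hj hab)
    have hInter : {ω | ∀ n : ℕ, 0 < ∑ m ∈ Finset.range (n + 1), X (h m) ω}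
        = ⋂ N, {ω | ∀ j < N, 0 < ∑ m ∈ Finset.range (j + 1), X (h m) ω} := by
      ext ω
      simp only [Set.mem_setOf_eq, Set.mem_iInter]
      exact ⟨fun H N j _ => H j, fun H n => H (n + 1) n (Nat.lt_succ_self n)⟩
    rw [hInter]
    refine Directed.measure_iInter (fun N => (hmeasD N).nullMeasurableSet)
      (hanti.directed_ge) ⟨0, measure_ne_top _ _⟩
  have hid := cont id fun a b hab => hab
  simp only [id_eq] at hid
  rw [cont g hg, hid]
  have hkeyid := key id fun a b hab => hab
  simp only [id_eq] at hkeyid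
  simp only [key g hg, hkeyid]

end aux

/-- For an i.i.d. integrable real sequence with positive mean, with
positive probability all partial sums are strictly positive. -/
theorem statement1
    {Ω : Type*} [MeasurableSpace Ω] (P : Measure Ω) [IsProbabilityMeasure P]
    (X : ℕ → Ω → ℝ) (hmeas : ∀ n, Measurable (X n))
    (hindep : iIndepFun X P)
    (hident : ∀ n, P.map (X n) = P.map (X 0))
    (hint : Integrable (X 0) P)
    (hmean : 0 < ∫ ω, X 0 ω ∂P) :
    0 < P {ω | ∀ n : ℕ, 0 < ∑ m ∈ Finset.range (n + 1), X m ω} := by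
  classical
  set Z : ℕ → Ω → ℝ := fun n ω => ∑ m ∈ Finset.range n, X m ω with hZ
  -- strong law of large numbers
  have hident' : ∀ i, IdentDistrib (X i) (X 0) P P := fun i =>
    ⟨(hmeas i).aemeasurable, (hmeas 0).aemeasurable, hident i⟩
  have hpairwise : Pairwise (Function.onFun (IndepFun · · P) X) := fun i j hij =>
    hindep.indepFun hij
  have hslln := strong_law_ae_real X hint hpairwise hident'
  -- a.e., Z n → ∞
  have htends : ∀ᵐ ω ∂P, Filter.Tendsto (fun n => Z n ω) Filter.atTop Filter.atTop := by
    filter_upwards [hslln] with ω hω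
    have hc : 0 < (∫ ω, X 0 ω ∂P) / 2 := by linarith
    have h1 : ∀ᶠ n : ℕ in Filter.atTop, (∫ ω, X 0 ω ∂P) / 2 < Z n ω / n := by
      have := hω.eventually (eventually_gt_nhds (by linarith :
        (∫ ω, X 0 ω ∂P) / 2 < ∫ ω, X 0 ω ∂P))
      exact this
    have hbound : (fun n : ℕ => (∫ ω, X 0 ω ∂P) / 2 * n) ≤ᶠ[Filter.atTop]
        fun n => Z n ω := by
      filter_upwards [h1, Filter.eventually_ge_atTop 1] with n hn hn1
      have hnpos : (0 : ℝ) < n := by exact_mod_cast hn1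
      rw [lt_div_iff₀ hnpos] at hn
      linarith
    exact Filter.tendsto_atTop_mono' _ hbound
      (Filter.Tendsto.const_mul_atTop hc tendsto_natCast_atTop_atTop)
  -- a.e., there is a strict last minimum
  have hlastmin : ∀ᵐ ω ∂P, ∃ k, ∀ n, k < n → Z k ω < Z n ω := by
    filter_upwards [htends] with ω hω
    obtain ⟨N, hN⟩ := Filter.eventually_atTop.1 (hω.eventually
      (Filter.eventually_gt_atTop (Z 0 ω)))
    obtain ⟨k0, hk0mem, hk0⟩ := Finset.exists_min_image (Finset.range (N + 1))
      (fun n => Z n ω) ⟨0, by simp⟩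
    set T := (Finset.range (N + 1)).filter (fun n => Z n ω = Z k0 ω) with hT
    have hTne : T.Nonempty := ⟨k0, by simp [hT, hk0mem]⟩
    set k := T.max' hTne with hk
    have hkT : k ∈ T := T.max'_mem hTne
    have hkval : Z k ω = Z k0 ω := (Finset.mem_filter.1 hkT).2
    refine ⟨k, fun n hn => ?_⟩
    by_cases hnN : n ≤ N
    · have hnmem : n ∈ Finset.range (N + 1) := Finset.mem_range.2 (Nat.lt_succ_of_le hnN)
      have hge : Z k0 ω ≤ Z n ω := hk0 n hnmem
      rcases lt_or_eq_of_le hge with h | h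
      · rw [hkval]; exact h
      · exfalso
        have : n ∈ T := Finset.mem_filter.2 ⟨hnmem, h.symm⟩
        exact absurd (T.le_max' n this) (not_le.2 hn)
    · have hnN' : N ≤ n := le_of_not_ge hnN
      have h1 : Z 0 ω < Z n ω := hN n hnN'
      have h2 : Z k0 ω ≤ Z 0 ω := hk0 0 (Finset.mem_range.2 (Nat.succ_pos N))
      rw [hkval]; linarith
  -- translate to shifted events
  have hsum : ∀ k i ω, Z (k + (i + 1)) ω = Z k ω + ∑ m ∈ Finset.range (i + 1), X (k + m) ω := by
    intro k i ω
    simp only [hZ]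
    exact Finset.sum_range_add (fun m => X m ω) k (i + 1)
  have hunion : ∀ᵐ ω ∂P,
      ω ∈ ⋃ k, {ω | ∀ i : ℕ, 0 < ∑ m ∈ Finset.range (i + 1), X (k + m) ω} := by
    filter_upwards [hlastmin] with ω hω
    obtain ⟨k, hk⟩ := hω
    refine Set.mem_iUnion.2 ⟨k, fun i => ?_⟩
    have := hk (k + (i + 1)) (by omega)
    rw [hsum k i ω] at this
    linarith
  have hex : ∃ k, P {ω | ∀ i : ℕ, 0 < ∑ m ∈ Finset.range (i + 1), X (k + m) ω} ≠ 0 := by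
    by_contra hcon
    push_neg at hcon
    have hU : P (⋃ k, {ω | ∀ i : ℕ, 0 < ∑ m ∈ Finset.range (i + 1), X (k + m) ω}) = 0 :=
      measure_iUnion_null hcon
    have hnm := measure_eq_zero_iff_ae_notMem.1 hU
    obtain ⟨ω, h1, h2⟩ := (hunion.and hnm).exists
    exact h2 h1
  obtain ⟨k, hk⟩ := hex
  have hg : Function.Injective (fun m : ℕ => k + m) := fun a b hab => by simpa using hab
  have := event_prob_eq P X hmeas hindep hident (fun m => k + m) hg
  rw [← this]
  exact hk.bot_lt
end

section
/- In finite ballistic annihilation with velocities in {-1, 0, 1}, replacing the velocity of the leftmost particle by a smaller velocity (e.g., replacing +1 by 0, or by v ≤ v_0) while keeping all other particles fixed preserves the event that the leftmost particle survives the system of particles to its right: if the leftmost particle survives with velocity v_0, it also survives with any velocity v ≤ v_0. -/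
noncomputable section

/-- Meeting time of particles `i` and `j` (starting positions `x`, constant
velocities `v`), ignoring all other particles: the solution of
`x i + t * v i = x j + t * v j`. -/
def meetTime {ι : Type*} (x v : ι → ℝ) (i j : ι) : ℝ := (x j - x i) / (v i - v j)

/-- `M` is the annihilation matching of the ballistic annihilation dynamics for the
particles indexed by `I` (with starting positions `x` and velocities `v`): particles
move at constant speed and mutually annihilate in pairs at collisions, so that a pair
`i < j` annihilates iff `v i > v j` (they approach each other) and neither `i` nor `j`
is consumed in a chronologically earlier annihilation. -/
def IsBAMatching {ι : Type*} [LinearOrder ι] (I : Set ι) (x v : ι → ℝ)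
    (M : ι → ι → Prop) : Prop :=
  ∀ i j, M i j ↔
    i ∈ I ∧ j ∈ I ∧ i < j ∧ v j < v i ∧
      ∀ k l, M k l → meetTime x v k l < meetTime x v i j →
        k ≠ i ∧ k ≠ j ∧ l ≠ i ∧ l ≠ j

/-- Genericity of a configuration: no two distinct mutually approaching pairs meet at
the same time (in particular no triple collisions occur). -/
def BAGeneric {ι : Type*} [LinearOrder ι] (I : Set ι) (x v : ι → ℝ) : Prop :=
  ∀ i j k l, i ∈ I → j ∈ I → k ∈ I → l ∈ I → i < j → k < l →
    v j < v i → v l < v k → (i, j) ≠ (k, l) →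
      meetTime x v i j ≠ meetTime x v k l

/-- Particle `i` survives (is never annihilated) under the matching `M`. -/
def BASurvives {ι : Type*} (M : ι → ι → Prop) (i : ι) : Prop :=
  ∀ j, ¬ M i j ∧ ¬ M j i

end

/-- in finite ballistic annihilation with velocities in {-1,0,1},
lowering the velocity of the leftmost particle (keeping the others fixed) preserves the
event that the leftmost particle survives the system of particles to its right. -/
theorem statement15 {n : ℕ} (x v : Fin (n + 1) → ℝ) (hx : StrictMono x)
    (hv : ∀ i, v i = -1 ∨ v i = 0 ∨ v i = 1)
    (w : ℝ) (hw : w = -1 ∨ w = 0 ∨ w = 1) (hwle : w ≤ v 0)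
    (hgen : BAGeneric Set.univ x v)
    (hgen' : BAGeneric Set.univ x (Function.update v 0 w))
    (M M' : Fin (n + 1) → Fin (n + 1) → Prop)
    (hM : IsBAMatching Set.univ x v M)
    (hM' : IsBAMatching Set.univ x (Function.update v 0 w) M')
    (hsurv : BASurvives M 0) :
    BASurvives M' 0 := by
  classical
  set v' := Function.update v 0 w with hv'def
  have hv'0 : v' 0 = w := Function.update_self 0 w v
  have hv'ne : ∀ i : Fin (n+1), i ≠ 0 → v' i = v i := fun i hi => Function.update_of_ne hi w v
  have hMlt : ∀ a b, M a b → a < b := fun a b h => ((hM a b).mp h).2.2.1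
  have hM'lt : ∀ a b, M' a b → a < b := fun a b h => ((hM' a b).mp h).2.2.1
  have hMne0 : ∀ a b, M a b → a ≠ 0 ∧ b ≠ 0 := by
    intro a b hab
    refine ⟨fun h => (hsurv b).1 (h ▸ hab), fun h => ?_⟩
    exact absurd (h ▸ hMlt a b hab) (by simp)
  have hmeet : ∀ a b : Fin (n+1), a ≠ 0 → b ≠ 0 →
      meetTime x v' a b = meetTime x v a b := by
    intro a b ha hb
    simp [meetTime, hv'ne a ha, hv'ne b hb]
  have hwf : WellFounded (fun p q : Fin (n+1) × Fin (n+1) =>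
      meetTime x v' p.1 p.2 < meetTime x v' q.1 q.2) := by
    have h1 : IsTrans (Fin (n+1) × Fin (n+1)) (fun p q =>
        meetTime x v' p.1 p.2 < meetTime x v' q.1 q.2) := ⟨fun _ _ _ => lt_trans⟩
    have h2 : IsIrrefl (Fin (n+1) × Fin (n+1)) (fun p q =>
        meetTime x v' p.1 p.2 < meetTime x v' q.1 q.2) := ⟨fun _ => lt_irrefl _⟩
    exact Finite.wellFounded_of_trans_of_irrefl _
  have key : ∀ p : Fin (n+1) × Fin (n+1), M p.1 p.2 ↔ M' p.1 p.2 := by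
    intro p
    induction p using hwf.induction with
    | _ p IH =>
    obtain ⟨i, j⟩ := p
    simp only [] at IH ⊢
    constructor
    · intro hMp
      have h1 : i ≠ 0 := (hMne0 i j hMp).1
      have h2 : j ≠ 0 := (hMne0 i j hMp).2
      obtain ⟨-, -, hlt, hvlt, hblock⟩ := (hM i j).mp hMp
      refine (hM' i j).mpr ⟨Set.mem_univ _, Set.mem_univ _, hlt, ?_, ?_⟩
      · rw [hv'ne i h1, hv'ne j h2]; exact hvlt
      · intro a b hM'ab htab
        have hMab : M a b := (IH (a, b) htab).mpr hM'ab
        have ha : a ≠ 0 := (hMne0 a b hMab).1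
        have hb : b ≠ 0 := (hMne0 a b hMab).2
        rw [hmeet a b ha hb, hmeet i j h1 h2] at htab
        exact hblock a b hMab htab
    · intro hM'p
      obtain ⟨-, -, hlt, hvlt', hblock'⟩ := (hM' i j).mp hM'p
      have h2 : j ≠ 0 := fun h => absurd (h ▸ hlt) (by simp)
      by_cases h1 : i = 0
      · exfalso
        subst h1
        rw [hv'0, hv'ne j h2] at hvlt'
        have hvlt : v j < v 0 := lt_of_lt_of_le hvlt' hwle
        have hxpos : 0 < x j - x 0 := sub_pos.mpr (hx (Fin.pos_of_ne_zero h2))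
        have htle : meetTime x v 0 j ≤ meetTime x v' 0 j := by
          unfold meetTime
          rw [hv'0, hv'ne j h2]
          apply div_le_div_of_nonneg_left hxpos.le (sub_pos.mpr hvlt')
          exact sub_le_sub_right hwle _
        have hnM : ¬ M 0 j := (hsurv j).1
        rw [hM 0 j] at hnM
        push_neg at hnM
        obtain ⟨a, b, hMab, htab, hne⟩ :=
          hnM (Set.mem_univ _) (Set.mem_univ _) (Fin.pos_of_ne_zero h2) hvlt
        have ha : a ≠ 0 := (hMne0 a b hMab).1
        have hb : b ≠ 0 := (hMne0 a b hMab).2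
        have htab' : meetTime x v' a b < meetTime x v' 0 j := by
          rw [hmeet a b ha hb]
          exact lt_of_lt_of_le htab htle
        have hd := hblock' a b ((IH (a, b) htab').mp hMab) htab'
        exact hd.2.2.2 (hne hd.1 hd.2.1 hd.2.2.1)
      · have h2' : j ≠ 0 := h2
        obtain ⟨-, -, -, hvlt, -⟩ := (hM' i j).mp hM'p
        refine (hM i j).mpr ⟨Set.mem_univ _, Set.mem_univ _, hlt, ?_, ?_⟩
        · rw [← hv'ne i h1, ← hv'ne j h2]; exact hvlt'
        · intro a b hMab htab
          have ha : a ≠ 0 := (hMne0 a b hMab).1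
          have hb : b ≠ 0 := (hMne0 a b hMab).2
          have htab' : meetTime x v' a b < meetTime x v' i j := by
            rw [hmeet a b ha hb, hmeet i j h1 h2]; exact htab
          exact hblock' a b ((IH (a, b) htab').mp hMab) htab'
  intro j
  exact ⟨fun h => (hsurv j).1 ((key (0, j)).mpr h),
    fun h => (hsurv j).2 ((key (j, 0)).mpr h)⟩
end
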